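/- Let W, X, Y, A be jointly distributed finitely-valued random variables with H(W|X,Y) = 0. Then I(A : X,Y | W) ≤ I(A:X|Y) + I(A:Y|X) + H(W|X) + H(W|Y) + I(X:Y|W) − I(X:Y|A,W). -/

import Mathlib

open scoped BigOperators

namespace PaperIngleton

open Classical in
/-- Probability of an event under a pmf `p` on a finite sample space. -/
noncomputable def prob {Ω : Type*} [Fintype Ω] (p : Ω → ℝ) (E : Ω → Prop) : ℝ :=
  ∑ ω, if E ω then p ω else 0

/-- Shannon entropy of a finitely-valued random variable `X` under pmf `p`. -/
noncomputable def ent {Ω S : Type*} [Fintype Ω] [Fintype S] (p : Ω → ℝ) (X : Ω → S) : ℝ :=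
  -∑ s : S, prob p (fun ω => X ω = s) * Real.log (prob p (fun ω => X ω = s))

/-- Conditional entropy `H(X|Y)`. -/
noncomputable def condEnt {Ω S T : Type*} [Fintype Ω] [Fintype S] [Fintype T]
    (p : Ω → ℝ) (X : Ω → S) (Y : Ω → T) : ℝ :=
  ent p (fun ω => (X ω, Y ω)) - ent p Y

/-- Mutual information `I(X:Y)`. -/
noncomputable def mi {Ω S T : Type*} [Fintype Ω] [Fintype S] [Fintype T]
    (p : Ω → ℝ) (X : Ω → S) (Y : Ω → T) : ℝ :=
  ent p X + ent p Y - ent p (fun ω => (X ω, Y ω))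

/-- Conditional mutual information `I(X:Y|Z)`. -/
noncomputable def cmi {Ω S T U : Type*} [Fintype Ω] [Fintype S] [Fintype T] [Fintype U]
    (p : Ω → ℝ) (X : Ω → S) (Y : Ω → T) (Z : Ω → U) : ℝ :=
  ent p (fun ω => (X ω, Z ω)) + ent p (fun ω => (Y ω, Z ω))
    - ent p (fun ω => (X ω, Y ω, Z ω)) - ent p Z

end PaperIngleton

namespace PaperIngleton

open Real Finset

section Aux
variable {Ω S T U : Type} [Fintype Ω] [Fintype S] [Fintype T] [Fintype U]
set_option linter.unusedSectionVars false

lemma prob_nonneg (p : Ω → ℝ) (hp : ∀ ω, 0 ≤ p ω) (E : Ω → Prop) : 0 ≤ prob p E := by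
  classical
  unfold prob
  exact Finset.sum_nonneg fun ω _ => by split <;> simp [hp ω]

lemma prob_snd_marg (p : Ω → ℝ) (X : Ω → S) (Z : Ω → U) (u : U) :
    prob p (fun ω => Z ω = u) = ∑ s, prob p (fun ω => (X ω, Z ω) = (s, u)) := by
  classical
  simp only [prob]
  rw [Finset.sum_comm]
  refine Finset.sum_congr rfl fun ω _ => ?_
  simp only [Prod.mk.injEq]
  rw [Finset.sum_eq_single (X ω)]
  · simp
  · intro s _ hs
    have : ¬ X ω = s := fun h => hs h.symm
    simp [this]
  · simp

lemma prob_mid_marg (p : Ω → ℝ) (X : Ω → S) (Y : Ω → T) (Z : Ω → U) (s : S) (u : U) :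
    prob p (fun ω => (X ω, Z ω) = (s, u))
      = ∑ t, prob p (fun ω => (X ω, Y ω, Z ω) = (s, t, u)) := by
  classical
  simp only [prob]
  rw [Finset.sum_comm]
  refine Finset.sum_congr rfl fun ω _ => ?_
  simp only [Prod.mk.injEq]
  rw [Finset.sum_eq_single (Y ω)]
  · simp
  · intro t _ ht
    have : ¬ Y ω = t := fun h => ht h.symm
    simp [this]
  · simp

lemma prob_fst_marg (p : Ω → ℝ) (X : Ω → S) (Y : Ω → T) (Z : Ω → U) (t : T) (u : U) :
    prob p (fun ω => (Y ω, Z ω) = (t, u))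
      = ∑ s, prob p (fun ω => (X ω, Y ω, Z ω) = (s, t, u)) := by
  classical
  simp only [prob]
  rw [Finset.sum_comm]
  refine Finset.sum_congr rfl fun ω _ => ?_
  simp only [Prod.mk.injEq]
  rw [Finset.sum_eq_single (X ω)]
  · simp
  · intro s _ hs
    have : ¬ X ω = s := fun h => hs h.symm
    simp [this]
  · simp

lemma prob_z_marg (p : Ω → ℝ) (X : Ω → S) (Y : Ω → T) (Z : Ω → U) (u : U) :
    prob p (fun ω => Z ω = u)
      = ∑ s, ∑ t, prob p (fun ω => (X ω, Y ω, Z ω) = (s, t, u)) := by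
  rw [prob_snd_marg p Y Z u, Finset.sum_comm]
  exact Finset.sum_congr rfl fun t _ => prob_fst_marg p X Y Z t u

lemma ent_comp_equiv (p : Ω → ℝ) (e : S ≃ T) (X : Ω → S) :
    ent p (fun ω => e (X ω)) = ent p X := by
  classical
  simp only [ent]
  congr 1
  have key : ∀ t, prob p (fun ω => e (X ω) = t) = prob p (fun ω => X ω = e.symm t) := by
    intro t
    simp only [prob]
    refine Finset.sum_congr rfl fun ω _ => ?_
    exact if_congr (Equiv.eq_symm_apply e).symm rfl rfl
  simp_rw [key]
  exact Fintype.sum_equiv e.symm _ _ (fun t => rfl)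

lemma ent_congr (p : Ω → ℝ) (e : S ≃ T) (X : Ω → S) (Y : Ω → T)
    (h : ∀ ω, Y ω = e (X ω)) : ent p Y = ent p X := by
  have hYX : Y = fun ω => e (X ω) := funext h
  rw [hYX, ent_comp_equiv]

lemma ent_le_ent_pair (p : Ω → ℝ) (hp : ∀ ω, 0 ≤ p ω) (X : Ω → S) (Z : Ω → U) :
    ent p Z ≤ ent p (fun ω => (X ω, Z ω)) := by
  classical
  simp only [ent, neg_le_neg_iff]
  rw [Fintype.sum_prod_type]
  have hq : ∀ u, prob p (fun ω => Z ω = u) = ∑ s, prob p (fun ω => (X ω, Z ω) = (s, u)) :=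
    prob_snd_marg p X Z
  calc ∑ s, ∑ u, prob p (fun ω => (X ω, Z ω) = (s, u)) * log (prob p (fun ω => (X ω, Z ω) = (s, u)))
      ≤ ∑ s, ∑ u, prob p (fun ω => (X ω, Z ω) = (s, u)) * log (prob p (fun ω => Z ω = u)) := by
        refine Finset.sum_le_sum fun s _ => Finset.sum_le_sum fun u _ => ?_
        rcases (prob_nonneg p hp (fun ω => (X ω, Z ω) = (s, u))).eq_or_lt with h0 | h0
        · rw [← h0]; simp
        · refine mul_le_mul_of_nonneg_left (Real.log_le_log h0 ?_) h0.le
          rw [hq u]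
          exact Finset.single_le_sum
            (fun s' _ => prob_nonneg p hp (fun ω => (X ω, Z ω) = (s', u))) (Finset.mem_univ s)
    _ = ∑ u, prob p (fun ω => Z ω = u) * log (prob p (fun ω => Z ω = u)) := by
        rw [Finset.sum_comm]
        refine Finset.sum_congr rfl fun u _ => ?_
        rw [← Finset.sum_mul, ← hq u]

lemma key_term {r a b c : ℝ} (hr : 0 ≤ r) (ha : 0 ≤ a) (hb : 0 ≤ b) (hc : 0 ≤ c)
    (hra : r ≤ a) (hrb : r ≤ b) (hrc : r ≤ c) :
    r * log a + r * log b - r * log r - r * log c ≤ a * b / c - r := by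
  rcases hr.eq_or_lt with h0 | h0
  · rw [← h0]
    simp
    positivity
  · have ha' : 0 < a := h0.trans_le hra
    have hb' : 0 < b := h0.trans_le hrb
    have hc' : 0 < c := h0.trans_le hrc
    have hx : (0:ℝ) < a * b / (r * c) := by positivity
    have hlog := Real.log_le_sub_one_of_pos hx
    rw [Real.log_div (by positivity) (by positivity), Real.log_mul ha'.ne' hb'.ne',
      Real.log_mul h0.ne' hc'.ne'] at hlog
    have h2 : r * (log a + log b - (log r + log c)) ≤ r * (a * b / (r * c) - 1) :=
      mul_le_mul_of_nonneg_left hlog h0.le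
    have h3 : r * (a * b / (r * c) - 1) = a * b / c - r := by
      field_simp
    nlinarith [h2, h3]

lemma analytic_submod (r : S → T → U → ℝ) (hr : ∀ s t u, 0 ≤ r s t u) :
    ∑ s, ∑ u, (∑ t, r s t u) * log (∑ t, r s t u)
      + ∑ t, ∑ u, (∑ s, r s t u) * log (∑ s, r s t u)
    ≤ (∑ s, ∑ t, ∑ u, r s t u * log (r s t u))
      + ∑ u, (∑ s, ∑ t, r s t u) * log (∑ s, ∑ t, r s t u) := by
  classical
  have ha0 : ∀ s u, (0:ℝ) ≤ ∑ t, r s t u := fun s u => Finset.sum_nonneg fun t _ => hr s t u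
  have hb0 : ∀ t u, (0:ℝ) ≤ ∑ s, r s t u := fun t u => Finset.sum_nonneg fun s _ => hr s t u
  have hc0 : ∀ u, (0:ℝ) ≤ ∑ s, ∑ t, r s t u := fun u => Finset.sum_nonneg fun s _ => ha0 s u
  have hcb : ∀ u, ∑ t, ∑ s, r s t u = ∑ s, ∑ t, r s t u := fun u => Finset.sum_comm
  have hrla : ∀ s t u, r s t u ≤ ∑ t', r s t' u := fun s t u =>
    Finset.single_le_sum (fun t' _ => hr s t' u) (Finset.mem_univ t)
  have hrlb : ∀ s t u, r s t u ≤ ∑ s', r s' t u := fun s t u =>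
    Finset.single_le_sum (fun s' _ => hr s' t u) (Finset.mem_univ s)
  have hrlc : ∀ s t u, r s t u ≤ ∑ s', ∑ t', r s' t' u := fun s t u =>
    (hrla s t u).trans (Finset.single_le_sum (fun s' _ => ha0 s' u) (Finset.mem_univ s))
  have hA : ∑ s, ∑ u, (∑ t, r s t u) * log (∑ t, r s t u)
      = ∑ s, ∑ t, ∑ u, r s t u * log (∑ t', r s t' u) := by
    refine Finset.sum_congr rfl fun s _ => ?_
    rw [Finset.sum_comm]
    exact Finset.sum_congr rfl fun u _ => (Finset.sum_mul _ _ _)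
  have hB : ∑ t, ∑ u, (∑ s, r s t u) * log (∑ s, r s t u)
      = ∑ s, ∑ t, ∑ u, r s t u * log (∑ s', r s' t u) := by
    conv_rhs => rw [Finset.sum_comm]
    refine Finset.sum_congr rfl fun t _ => ?_
    conv_rhs => rw [Finset.sum_comm]
    exact Finset.sum_congr rfl fun u _ => (Finset.sum_mul _ _ _)
  have hC : ∑ u, (∑ s, ∑ t, r s t u) * log (∑ s, ∑ t, r s t u)
      = ∑ s, ∑ t, ∑ u, r s t u * log (∑ s', ∑ t', r s' t' u) := by
    have step1 : ∀ s, ∑ t, ∑ u, r s t u * log (∑ s', ∑ t', r s' t' u)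
        = ∑ u, (∑ t, r s t u) * log (∑ s', ∑ t', r s' t' u) := by
      intro s
      rw [Finset.sum_comm]
      exact Finset.sum_congr rfl fun u _ => (Finset.sum_mul _ _ _).symm
    simp_rw [step1]
    rw [Finset.sum_comm]
    exact Finset.sum_congr rfl fun u _ => (Finset.sum_mul _ _ _)
  have hmass : ∑ s, ∑ t, ∑ u, r s t u = ∑ u, ∑ s, ∑ t, r s t u := by
    have step1 : ∀ s, ∑ t, ∑ u, r s t u = ∑ u, ∑ t, r s t u := fun s => Finset.sum_comm
    simp_rw [step1]
    exact Finset.sum_comm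
  have hquot : ∑ s, ∑ t, ∑ u, (∑ t', r s t' u) * (∑ s', r s' t u) / (∑ s', ∑ t', r s' t' u)
      = ∑ u, ∑ s, ∑ t, r s t u := by
    have step1 : ∀ s, ∑ t, ∑ u, (∑ t', r s t' u) * (∑ s', r s' t u) / (∑ s', ∑ t', r s' t' u)
        = ∑ u, ∑ t, (∑ t', r s t' u) * (∑ s', r s' t u) / (∑ s', ∑ t', r s' t' u) :=
      fun s => Finset.sum_comm
    simp_rw [step1]
    rw [Finset.sum_comm]
    refine Finset.sum_congr rfl fun u _ => ?_
    rcases (hc0 u).eq_or_lt with h0 | h0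
    · have haz : ∀ s, ∑ t, r s t u = 0 := by
        intro s
        have := (Finset.sum_eq_zero_iff_of_nonneg (fun s' _ => ha0 s' u)).1 h0.symm
        exact this s (Finset.mem_univ s)
      rw [← h0]
      refine Finset.sum_eq_zero fun s _ => Finset.sum_eq_zero fun t _ => ?_
      simp
    · have step2 : ∀ s, ∑ t, (∑ t', r s t' u) * (∑ s', r s' t u) / (∑ s', ∑ t', r s' t' u)
          = ∑ t', r s t' u := by
        intro s
        have e1 : ∀ t, (∑ t', r s t' u) * (∑ s', r s' t u) / (∑ s', ∑ t', r s' t' u)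
            = (∑ t', r s t' u) / (∑ s', ∑ t', r s' t' u) * (∑ s', r s' t u) := fun t => by ring
        simp_rw [e1]
        rw [← Finset.mul_sum, hcb u]
        field_simp
      simp_rw [step2]
  have hterm : ∑ s, ∑ t, ∑ u,
      (r s t u * log (∑ t', r s t' u) + r s t u * log (∑ s', r s' t u)
        - r s t u * log (r s t u) - r s t u * log (∑ s', ∑ t', r s' t' u))
      ≤ ∑ s, ∑ t, ∑ u,
        ((∑ t', r s t' u) * (∑ s', r s' t u) / (∑ s', ∑ t', r s' t' u) - r s t u) := by
    refine Finset.sum_le_sum fun s _ => Finset.sum_le_sum fun t _ => Finset.sum_le_sum fun u _ => ?_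
    exact key_term (hr s t u) (ha0 s u) (hb0 t u) (hc0 u) (hrla s t u) (hrlb s t u) (hrlc s t u)
  have hsplit : ∑ s, ∑ t, ∑ u,
      (r s t u * log (∑ t', r s t' u) + r s t u * log (∑ s', r s' t u)
        - r s t u * log (r s t u) - r s t u * log (∑ s', ∑ t', r s' t' u))
      = (∑ s, ∑ t, ∑ u, r s t u * log (∑ t', r s t' u))
        + (∑ s, ∑ t, ∑ u, r s t u * log (∑ s', r s' t u))
        - (∑ s, ∑ t, ∑ u, r s t u * log (r s t u))
        - (∑ s, ∑ t, ∑ u, r s t u * log (∑ s', ∑ t', r s' t' u)) := by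
    simp only [Finset.sum_sub_distrib, Finset.sum_add_distrib]
  have hsplit2 : ∑ s, ∑ t, ∑ u,
      ((∑ t', r s t' u) * (∑ s', r s' t u) / (∑ s', ∑ t', r s' t' u) - r s t u)
      = (∑ s, ∑ t, ∑ u, (∑ t', r s t' u) * (∑ s', r s' t u) / (∑ s', ∑ t', r s' t' u))
        - ∑ s, ∑ t, ∑ u, r s t u := by
    simp only [Finset.sum_sub_distrib]
  linarith [hterm, hA, hB, hC, hmass, hquot, hsplit, hsplit2]

lemma cmi_nonneg (p : Ω → ℝ) (hp : ∀ ω, 0 ≤ p ω) (X : Ω → S) (Y : Ω → T) (Z : Ω → U) :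
    0 ≤ cmi p X Y Z := by
  classical
  have eXYZ : ent p (fun ω => (X ω, Y ω, Z ω))
      = -∑ s, ∑ t, ∑ u, prob p (fun ω => (X ω, Y ω, Z ω) = (s, t, u))
          * log (prob p (fun ω => (X ω, Y ω, Z ω) = (s, t, u))) := by
    simp only [ent, Fintype.sum_prod_type]
  have eXZ : ent p (fun ω => (X ω, Z ω))
      = -∑ s, ∑ u, (∑ t, prob p (fun ω => (X ω, Y ω, Z ω) = (s, t, u)))
          * log (∑ t, prob p (fun ω => (X ω, Y ω, Z ω) = (s, t, u))) := by
    simp only [ent, Fintype.sum_prod_type]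
    simp_rw [prob_mid_marg p X Y Z]
  have eYZ : ent p (fun ω => (Y ω, Z ω))
      = -∑ t, ∑ u, (∑ s, prob p (fun ω => (X ω, Y ω, Z ω) = (s, t, u)))
          * log (∑ s, prob p (fun ω => (X ω, Y ω, Z ω) = (s, t, u))) := by
    simp only [ent, Fintype.sum_prod_type]
    simp_rw [prob_fst_marg p X Y Z]
  have eZ : ent p Z
      = -∑ u, (∑ s, ∑ t, prob p (fun ω => (X ω, Y ω, Z ω) = (s, t, u)))
          * log (∑ s, ∑ t, prob p (fun ω => (X ω, Y ω, Z ω) = (s, t, u))) := by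
    simp only [ent]
    simp_rw [prob_z_marg p X Y Z]
  have key := analytic_submod (fun s t u => prob p (fun ω => (X ω, Y ω, Z ω) = (s, t, u)))
    (fun s t u => prob_nonneg p hp _)
  unfold cmi
  rw [eXYZ, eXZ, eYZ, eZ]
  linarith [key]

end Aux

theorem stmt12 {Ω S T U V : Type} [Fintype Ω] [Fintype S] [Fintype T] [Fintype U] [Fintype V]
    (p : Ω → ℝ) (hp : ∀ ω, 0 ≤ p ω) (hp1 : ∑ ω, p ω = 1)
    (W : Ω → V) (X : Ω → S) (Y : Ω → T) (A : Ω → U)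
    (hWXY : condEnt p W (fun ω => (X ω, Y ω)) = 0) :
    cmi p A (fun ω => (X ω, Y ω)) W
      ≤ cmi p A X Y + cmi p A Y X + condEnt p W X + condEnt p W Y
        + cmi p X Y W - cmi p X Y (fun ω => (A ω, W ω)) := by
  classical
  -- reordering equalities
  have q1 : ent p (fun ω => (Y ω, X ω)) = ent p (fun ω => (X ω, Y ω)) :=
    ent_congr p ⟨fun q => (q.2, q.1), fun q => (q.2, q.1), fun _ => rfl, fun _ => rfl⟩
      (fun ω => (X ω, Y ω)) _ (fun ω => rfl)
  have q2 : ent p (fun ω => (A ω, Y ω, X ω)) = ent p (fun ω => (A ω, X ω, Y ω)) :=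
    ent_congr p ⟨fun q => (q.1, q.2.2, q.2.1), fun q => (q.1, q.2.2, q.2.1),
      fun _ => rfl, fun _ => rfl⟩ (fun ω => (A ω, X ω, Y ω)) _ (fun ω => rfl)
  have q3 : ent p (fun ω => ((X ω, Y ω), W ω)) = ent p (fun ω => (X ω, Y ω, W ω)) :=
    ent_congr p ⟨fun q => ((q.1, q.2.1), q.2.2), fun q => (q.1.1, q.1.2, q.2),
      fun _ => rfl, fun _ => rfl⟩ (fun ω => (X ω, Y ω, W ω)) _ (fun ω => rfl)
  have q4 : ent p (fun ω => (W ω, X ω, Y ω)) = ent p (fun ω => (X ω, Y ω, W ω)) :=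
    ent_congr p ⟨fun q => (q.2.2, q.1, q.2.1), fun q => (q.2.1, q.2.2, q.1),
      fun _ => rfl, fun _ => rfl⟩ (fun ω => (X ω, Y ω, W ω)) _ (fun ω => rfl)
  have q5 : ent p (fun ω => (X ω, W ω)) = ent p (fun ω => (W ω, X ω)) :=
    ent_congr p ⟨fun q => (q.2, q.1), fun q => (q.2, q.1), fun _ => rfl, fun _ => rfl⟩
      (fun ω => (W ω, X ω)) _ (fun ω => rfl)
  have q6 : ent p (fun ω => (Y ω, W ω)) = ent p (fun ω => (W ω, Y ω)) :=
    ent_congr p ⟨fun q => (q.2, q.1), fun q => (q.2, q.1), fun _ => rfl, fun _ => rfl⟩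
      (fun ω => (W ω, Y ω)) _ (fun ω => rfl)
  have q7 : ent p (fun ω => (A ω, (X ω, Y ω), W ω)) = ent p (fun ω => (A ω, X ω, Y ω, W ω)) :=
    ent_congr p ⟨fun q => (q.1, (q.2.1, q.2.2.1), q.2.2.2), fun q => (q.1, q.2.1.1, q.2.1.2, q.2.2),
      fun _ => rfl, fun _ => rfl⟩ (fun ω => (A ω, X ω, Y ω, W ω)) _ (fun ω => rfl)
  have q8 : ent p (fun ω => (X ω, Y ω, A ω, W ω)) = ent p (fun ω => (A ω, X ω, Y ω, W ω)) :=
    ent_congr p ⟨fun q => (q.2.1, q.2.2.1, q.1, q.2.2.2), fun q => (q.2.2.1, q.1, q.2.1, q.2.2.2),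
      fun _ => rfl, fun _ => rfl⟩ (fun ω => (A ω, X ω, Y ω, W ω)) _ (fun ω => rfl)
  have q9 : ent p (fun ω => (X ω, A ω, W ω)) = ent p (fun ω => (A ω, X ω, W ω)) :=
    ent_congr p ⟨fun q => (q.2.1, q.1, q.2.2), fun q => (q.2.1, q.1, q.2.2),
      fun _ => rfl, fun _ => rfl⟩ (fun ω => (A ω, X ω, W ω)) _ (fun ω => rfl)
  have q10 : ent p (fun ω => (Y ω, A ω, W ω)) = ent p (fun ω => (A ω, Y ω, W ω)) :=
    ent_congr p ⟨fun q => (q.2.1, q.1, q.2.2), fun q => (q.2.1, q.1, q.2.2),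
      fun _ => rfl, fun _ => rfl⟩ (fun ω => (A ω, Y ω, W ω)) _ (fun ω => rfl)
  have q11 : ent p (fun ω => (A ω, W ω, X ω)) = ent p (fun ω => (A ω, X ω, W ω)) :=
    ent_congr p ⟨fun q => (q.1, q.2.2, q.2.1), fun q => (q.1, q.2.2, q.2.1),
      fun _ => rfl, fun _ => rfl⟩ (fun ω => (A ω, X ω, W ω)) _ (fun ω => rfl)
  have q12 : ent p (fun ω => (A ω, W ω, Y ω)) = ent p (fun ω => (A ω, Y ω, W ω)) :=
    ent_congr p ⟨fun q => (q.1, q.2.2, q.2.1), fun q => (q.1, q.2.2, q.2.1),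
      fun _ => rfl, fun _ => rfl⟩ (fun ω => (A ω, Y ω, W ω)) _ (fun ω => rfl)
  have q13 : ent p (fun ω => (W ω, A ω, X ω, Y ω)) = ent p (fun ω => (A ω, X ω, Y ω, W ω)) :=
    ent_congr p ⟨fun q => (q.2.2.2, q.1, q.2.1, q.2.2.1), fun q => (q.2.1, q.2.2.1, q.2.2.2, q.1),
      fun _ => rfl, fun _ => rfl⟩ (fun ω => (A ω, X ω, Y ω, W ω)) _ (fun ω => rfl)
  -- basic Shannon inequalities
  have i1 := cmi_nonneg p hp A W X
  have i2 := cmi_nonneg p hp A W Y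
  have i3 := ent_le_ent_pair p hp W X
  have i4 := ent_le_ent_pair p hp W Y
  have i5 := cmi_nonneg p hp W A (fun ω => (X ω, Y ω))
  have i6 := ent_le_ent_pair p hp W (fun ω => (A ω, X ω, Y ω))
  simp only [cmi] at i1 i2 i5
  simp only [condEnt] at hWXY
  simp only [cmi, condEnt]
  linarith [q1, q2, q3, q4, q5, q6, q7, q8, q9, q10, q11, q12, q13, i1, i2, i3, i4, i5, i6, hWXY]

end PaperIngleton
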